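/- The maximal game length of the ordered Zeckendorf game is asymptotically n²/2: the ratio M(n)/(n²/2) converges to 1 as n → ∞. -/

import Mathlib

/-- Fibonacci numbers indexed so that `F 1 = 1`, `F 2 = 2`,
and `F (i+1) = F i + F (i-1)`. -/
def F (i : ℕ) : ℕ := Nat.fib (i + 1)

/-- A single legal move of the ordered Zeckendorf game, acting on an
adjacent pair of entries of the list of indices. -/
inductive Move : List ℕ → List ℕ → Prop
  | merge (a b : List ℕ) (i : ℕ) (hi : 1 ≤ i) :
      Move (a ++ [i, i + 1] ++ b) (a ++ [i + 2] ++ b)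
  | mergeOnes (a b : List ℕ) :
      Move (a ++ [1, 1] ++ b) (a ++ [2] ++ b)
  | split (a b : List ℕ) (i : ℕ) (hi : 2 < i) :
      Move (a ++ [i, i] ++ b) (a ++ [i - 2, i + 1] ++ b)
  | splitTwos (a b : List ℕ) :
      Move (a ++ [2, 2] ++ b) (a ++ [1, 3] ++ b)
  | switch (a b : List ℕ) (i j : ℕ) (hj : 1 ≤ j) (hij : j < i) :
      Move (a ++ [i, j] ++ b) (a ++ [j, i] ++ b)

/-- A play of the ordered Zeckendorf game on `n` with `m` moves:
the initial state is `n` copies of `1`, and each step is a legal move. -/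
def IsPlay (n : ℕ) (s : ℕ → List ℕ) (m : ℕ) : Prop :=
  s 0 = List.replicate n 1 ∧ ∀ t < m, Move (s t) (s (t + 1))

/-- A state is terminal if no legal move applies to it. -/
def Terminal (S : List ℕ) : Prop := ∀ T, ¬ Move S T

/-- The total Fibonacci value of a state. -/
def val (S : List ℕ) : ℕ := (S.map F).sum

/-- The monovariant `f(S) = Σ_{j=1}^k (k+1−j)·F_{i_j}` (here with
`j` running over 0-based positions, so the weight of position `j` is
`k − j`). -/
def f (S : List ℕ) : ℕ := ∑ j : Fin S.length, (S.length - (j : ℕ)) * F (S.get j)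

/-- `M n` is the maximal number of moves in a completed play of the
ordered Zeckendorf game on `n`. -/
noncomputable def M (n : ℕ) : ℕ :=
  sSup {m | ∃ s : ℕ → List ℕ, IsPlay n s m ∧ Terminal (s m)}

/-- The golden ratio `φ = (1+√5)/2`. -/
noncomputable def phi : ℝ := (1 + Real.sqrt 5) / 2

/-- Logarithm to base `φ`. -/
noncomputable def logphi (x : ℝ) : ℝ := Real.log x / Real.log phi

namespace ZAux

lemma F_add_two (k : ℕ) : F (k+2) = F (k+1) + F k := by
  show Nat.fib (k+3) = _
  rw [show k+3 = (k+1)+2 by ring, Nat.fib_add_two]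
  simp [F]; ring

lemma F_pos (i : ℕ) : 0 < F i := Nat.fib_pos.2 (Nat.succ_pos i)

lemma F_one_le (i : ℕ) : 1 ≤ F i := F_pos i

lemma F_mono : Monotone F := fun i j h => Nat.fib_mono (by omega)

lemma F_lt {j i : ℕ} (hj : 1 ≤ j) (hij : j < i) : F j < F i := by
  have h1 : F j < F (j+1) := by
    show Nat.fib (j+1) < Nat.fib (j+2)
    exact Nat.fib_lt_fib_succ (by omega)
  exact lt_of_lt_of_le h1 (F_mono (by omega))

@[simp] lemma F1 : F 1 = 1 := rfl
@[simp] lemma F2 : F 2 = 2 := rfl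
@[simp] lemma F3 : F 3 = 3 := rfl
@[simp] lemma F4 : F 4 = 5 := rfl

@[simp] lemma val_nil : val [] = 0 := rfl
@[simp] lemma val_cons (x : ℕ) (s : List ℕ) : val (x :: s) = F x + val s := rfl
@[simp] lemma val_append (u v : List ℕ) : val (u ++ v) = val u + val v := by
  simp [val]

/-- positional weight function (our own copy of `f`). -/
def wt : List ℕ → ℕ
  | [] => 0
  | x :: s => (s.length + 1) * F x + wt s

@[simp] lemma wt_nil : wt [] = 0 := rfl
@[simp] lemma wt_cons (x : ℕ) (s : List ℕ) :
    wt (x :: s) = (s.length + 1) * F x + wt s := rfl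

lemma wt_append (u v : List ℕ) :
    wt (u ++ v) = wt u + v.length * val u + wt v := by
  induction u with
  | nil => simp
  | cons x u ih => simp [ih]; ring

/-- the superlinear weight Ω. -/
def om (S : List ℕ) : ℕ := (S.map (fun x => x * F x)).sum

@[simp] lemma om_nil : om [] = 0 := rfl
@[simp] lemma om_cons (x : ℕ) (s : List ℕ) : om (x :: s) = x * F x + om s := rfl
@[simp] lemma om_append (u v : List ℕ) : om (u ++ v) = om u + om v := by simp [om]

/-- the potential `Θ`. -/
def th (S : List ℕ) : ℕ := wt S + om S

lemma wt_ctx (a P b : List ℕ) :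
    wt (a ++ P ++ b) =
      wt a + (P.length + b.length) * val a + wt P + b.length * val P + wt b := by
  rw [List.append_assoc, wt_append, wt_append]; simp; ring

lemma th_ctx (a P b : List ℕ) :
    th (a ++ P ++ b) =
      wt a + (P.length + b.length) * val a + wt P + b.length * val P + wt b
        + om a + om P + om b := by
  show wt _ + om _ = _
  rw [wt_ctx]; simp; ring

/-- every move preserves total value. -/
lemma val_move {S T : List ℕ} (h : Move S T) : val T = val S := by
  induction h with
  | merge a b i hi => simp [F_add_two]; ring
  | mergeOnes a b => simp; omega
  | split a b i hi =>
      obtain ⟨d, rfl⟩ : ∃ d, i = d + 3 := ⟨i - 3, by omega⟩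
      have h1 : F (d+4) = F (d+3) + F (d+2) := F_add_two (d+2)
      have h2 : F (d+3) = F (d+2) + F (d+1) := F_add_two (d+1)
      have h3 : F (d+2) = F (d+1) + F d := F_add_two d
      simp only [val_append, val_cons, val_nil, show d+3-2 = d+1 by omega,
        show d+3+1 = d+4 from rfl]
      omega
  | splitTwos a b => simp; omega
  | switch a b i j hj hij => simp; ring

/-- every move strictly decreases `wt`. -/
lemma wt_move {S T : List ℕ} (h : Move S T) : wt T < wt S := by
  induction h with
  | merge a b i hi =>
      rw [wt_ctx, wt_ctx]
      have h1 : F (i+2) = F (i+1) + F i := F_add_two i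
      have h2 := F_pos i
      simp only [List.length_cons, List.length_nil, wt_cons, wt_nil,
        val_cons, val_nil]
      nlinarith [Nat.zero_le (val a), Nat.zero_le b.length]
  | mergeOnes a b =>
      rw [wt_ctx, wt_ctx]
      simp only [List.length_cons, List.length_nil, wt_cons, wt_nil,
        val_cons, val_nil, F1, F2]
      nlinarith [Nat.zero_le (val a)]
  | split a b i hi =>
      obtain ⟨d, rfl⟩ : ∃ d, i = d + 3 := ⟨i - 3, by omega⟩
      rw [wt_ctx, wt_ctx]
      have h1 : F (d+4) = F (d+3) + F (d+2) := F_add_two (d+2)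
      have h2 : F (d+3) = F (d+2) + F (d+1) := F_add_two (d+1)
      have h3 : F (d+2) = F (d+1) + F d := F_add_two d
      have h4 := F_pos (d+2)
      simp only [show d+3-2 = d+1 by omega, show d+3+1 = d+4 from rfl,
        List.length_cons, List.length_nil, wt_cons, wt_nil, val_cons, val_nil]
      nlinarith
  | splitTwos a b =>
      rw [wt_ctx, wt_ctx]
      simp only [List.length_cons, List.length_nil, wt_cons, wt_nil,
        val_cons, val_nil, F1, F2, F3]
      nlinarith [Nat.zero_le (val a)]
  | switch a b i j hj hij =>
      rw [wt_ctx, wt_ctx]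
      have := F_lt hj hij
      simp only [List.length_cons, List.length_nil, wt_cons, wt_nil,
        val_cons, val_nil]
      nlinarith [Nat.zero_le (val a)]

end ZAux

namespace ZAux

/-- chains of moves with length. -/
inductive Cn : ℕ → List ℕ → List ℕ → Prop
  | refl (S : List ℕ) : Cn 0 S S
  | step {S T U : List ℕ} {k : ℕ} : Move S T → Cn k T U → Cn (k+1) S U

/-- chains of "good" moves: each move decreases `Θ` by at most 1. -/
inductive GCn : ℕ → List ℕ → List ℕ → Prop
  | refl (S : List ℕ) : GCn 0 S S
  | step {S T U : List ℕ} {k : ℕ} : Move S T → th S ≤ th T + 1 → GCn k T U →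
      GCn (k+1) S U

lemma GCn.toCn {k S T} (h : GCn k S T) : Cn k S T := by
  induction h with
  | refl S => exact Cn.refl S
  | step m _ _ ih => exact Cn.step m ih

lemma Cn.trans {j k S T U} (h1 : Cn j S T) (h2 : Cn k T U) : Cn (j + k) S U := by
  induction h1 with
  | refl S => simpa using h2
  | step m _ ih => simpa [Nat.add_right_comm] using Cn.step m (ih h2)

lemma GCn.trans {j k S T U} (h1 : GCn j S T) (h2 : GCn k T U) : GCn (j + k) S U := by
  induction h1 with
  | refl S => simpa using h2
  | step m hth _ ih => simpa [Nat.add_right_comm] using GCn.step m hth (ih h2)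

/-- key lower bound: a good chain has length at least the Θ-drop. -/
lemma GCn.th_le {k S T} (h : GCn k S T) : th S ≤ th T + k := by
  induction h with
  | refl S => omega
  | step _ hth _ ih => omega

lemma Cn.wt_le {k S T} (h : Cn k S T) : wt T + k ≤ wt S := by
  induction h with
  | refl S => omega
  | step m _ ih => have := wt_move m; omega

lemma Cn.val_eq {k S T} (h : Cn k S T) : val T = val S := by
  induction h with
  | refl S => rfl
  | step m _ ih => rw [ih, val_move m]

lemma GCn.single {S T} (m : Move S T) (hth : th S ≤ th T + 1) : GCn 1 S T :=
  GCn.step m hth (GCn.refl T)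

/-- helper for Θ-estimates of moves in context. -/
lemma th_pair {u v P Q : List ℕ} (hlen : P.length = Q.length)
    (hval : val P = val Q) (h : wt P + om P ≤ wt Q + om Q + 1) :
    th (u ++ P ++ v) ≤ th (u ++ Q ++ v) + 1 := by
  rw [th_ctx, th_ctx, hlen, hval]; omega

lemma th_front {v P Q : List ℕ} (hlen : Q.length ≤ P.length)
    (hval : val P = val Q) (h : wt P + om P ≤ wt Q + om Q + 1) :
    th (P ++ v) ≤ th (Q ++ v) + 1 := by
  have e1 : th (P ++ v) = wt P + v.length * val P + wt v + om P + om v := by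
    show wt _ + om _ = _
    rw [wt_append]; simp; ring
  have e2 : th (Q ++ v) = wt Q + v.length * val Q + wt v + om Q + om v := by
    show wt _ + om _ = _
    rw [wt_append]; simp; ring
  rw [e1, e2, hval]; omega

/-- good move: switch a 2 right past a 1. -/
lemma gm_switch21 (u v : List ℕ) :
    GCn 1 (u ++ [2, 1] ++ v) (u ++ [1, 2] ++ v) :=
  GCn.single (Move.switch u v 2 1 le_rfl (by norm_num))
    (th_pair rfl (by decide) (by decide))

/-- good move: switch a 3 right past a 2. -/
lemma gm_switch32 (u v : List ℕ) :
    GCn 1 (u ++ [3, 2] ++ v) (u ++ [2, 3] ++ v) :=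
  GCn.single (Move.switch u v 3 2 (by norm_num) (by norm_num))
    (th_pair rfl (by decide) (by decide))

/-- good move: split a pair of 2s anywhere. -/
lemma gm_splitTwos (u v : List ℕ) :
    GCn 1 (u ++ [2, 2] ++ v) (u ++ [1, 3] ++ v) :=
  GCn.single (Move.splitTwos u v)
    (th_pair rfl (by decide) (by decide))

/-- good move: split a pair of equal `c ≥ 3` anywhere. -/
lemma gm_split (u v : List ℕ) (c : ℕ) (hc : 3 ≤ c) :
    GCn 1 (u ++ [c, c] ++ v) (u ++ [c - 2, c + 1] ++ v) := by
  obtain ⟨d, rfl⟩ : ∃ d, c = d + 3 := ⟨c - 3, by omega⟩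
  refine GCn.single (Move.split u v (d+3) (by omega)) (th_pair rfl ?_ ?_)
  · have h1 : F (d+4) = F (d+3) + F (d+2) := F_add_two (d+2)
    have h2 : F (d+3) = F (d+2) + F (d+1) := F_add_two (d+1)
    simp only [val_cons, val_nil, show d+3-2 = d+1 by omega,
      show d+3+1 = d+4 from rfl]
    omega
  · have h1 : F (d+4) = F (d+3) + F (d+2) := F_add_two (d+2)
    have h2 : F (d+3) = F (d+2) + F (d+1) := F_add_two (d+1)
    have h3 : F (d+2) = F (d+1) + F d := F_add_two d
    have h4 : F (d+1) ≤ F (d+2) := F_mono (by omega)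
    have h5 : d * F (d+1) ≤ d * F (d+2) := Nat.mul_le_mul_left d h4
    simp only [wt_cons, wt_nil, om_cons, om_nil, List.length_cons,
      List.length_nil, show d+3-2 = d+1 by omega, show d+3+1 = d+4 from rfl]
    nlinarith
  
/-- good move: merge two 1s at the very front. -/
lemma gm_mergeOnes (v : List ℕ) : GCn 1 (1 :: 1 :: v) (2 :: v) := by
  have m : Move ([] ++ [1, 1] ++ v) ([] ++ [2] ++ v) := Move.mergeOnes [] v
  simp only [List.nil_append] at m
  refine GCn.single m ?_
  exact th_front (P := [1,1]) (Q := [2]) (by simp) (by decide) (by decide)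

/-- good move: merge a 1 and a 2 at the very front. -/
lemma gm_merge12 (v : List ℕ) : GCn 1 (1 :: 2 :: v) (3 :: v) := by
  have m : Move ([] ++ [1, 2] ++ v) ([] ++ [3] ++ v) := Move.merge [] v 1 le_rfl
  simp only [List.nil_append] at m
  refine GCn.single m ?_
  exact th_front (P := [1,2]) (Q := [3]) (by simp) (by decide) (by decide)

end ZAux

namespace ZAux

open List

lemma GCn.cast {k : ℕ} {S T S' T' : List ℕ} (h : GCn k S T) (hS : S = S')
    (hT : T = T') : GCn k S' T' := hS ▸ hT ▸ h

lemma GCn.trans' {j k n : ℕ} {S T U : List ℕ} (h1 : GCn j S T) (h2 : GCn k T U)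
    (hn : j + k = n) : GCn n S U := hn ▸ h1.trans h2

lemma Cn.cast {k : ℕ} {S T S' T' : List ℕ} (h : Cn k S T) (hS : S = S')
    (hT : T = T') : Cn k S' T' := hS ▸ hT ▸ h

/-- transport a 2 rightwards through a block of 1s. -/
lemma moveTwoRight : ∀ (m : ℕ) (u v : List ℕ),
    GCn m (u ++ [2] ++ replicate m 1 ++ v) (u ++ replicate m 1 ++ [2] ++ v) := by
  intro m
  induction m with
  | zero => intro u v; exact (GCn.refl (u ++ [2] ++ v)).cast (by simp) (by simp)
  | succ m ih =>
      intro u v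
      have h1 : GCn 1 (u ++ [2] ++ replicate (m+1) 1 ++ v)
          (u ++ [1] ++ [2] ++ (replicate m 1 ++ v)) :=
        (gm_switch21 u (replicate m 1 ++ v)).cast (by simp [replicate_succ])
          (by simp)
      have h2 : GCn m (u ++ [1] ++ [2] ++ (replicate m 1 ++ v))
          (u ++ replicate (m+1) 1 ++ [2] ++ v) :=
        (ih (u ++ [1]) v).cast (by simp) (by simp [replicate_succ])
      exact h1.trans' h2 (by omega)

/-- transport a 3 rightwards through a block of 2s. -/
lemma moveThreeRight : ∀ (m : ℕ) (u v : List ℕ),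
    GCn m (u ++ [3] ++ replicate m 2 ++ v) (u ++ replicate m 2 ++ [3] ++ v) := by
  intro m
  induction m with
  | zero => intro u v; exact (GCn.refl (u ++ [3] ++ v)).cast (by simp) (by simp)
  | succ m ih =>
      intro u v
      have h1 : GCn 1 (u ++ [3] ++ replicate (m+1) 2 ++ v)
          (u ++ [2] ++ [3] ++ (replicate m 2 ++ v)) :=
        (gm_switch32 u (replicate m 2 ++ v)).cast (by simp [replicate_succ])
          (by simp)
      have h2 : GCn m (u ++ [2] ++ [3] ++ (replicate m 2 ++ v))
          (u ++ replicate (m+1) 2 ++ [3] ++ v) :=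
        (ih (u ++ [2]) v).cast (by simp) (by simp [replicate_succ])
      exact h1.trans' h2 (by omega)

/-- transport a 1 leftwards through a block of 2s. -/
lemma moveOneLeft : ∀ (m : ℕ) (u v : List ℕ),
    GCn m (u ++ replicate m 2 ++ [1] ++ v) (u ++ [1] ++ replicate m 2 ++ v) := by
  intro m
  induction m with
  | zero => intro u v; exact (GCn.refl (u ++ [1] ++ v)).cast (by simp) (by simp)
  | succ m ih =>
      intro u v
      have h2 : GCn m (u ++ replicate (m+1) 2 ++ [1] ++ v)
          (u ++ [2] ++ [1] ++ (replicate m 2 ++ v)) :=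
        (ih (u ++ [2]) v).cast (by simp [replicate_succ]) (by simp)
      have h1 : GCn 1 (u ++ [2] ++ [1] ++ (replicate m 2 ++ v))
          (u ++ [1] ++ replicate (m+1) 2 ++ v) :=
        (gm_switch21 u (replicate m 2 ++ v)).cast (by simp)
          (by simp [replicate_succ])
      exact h2.trans' h1 (by omega)

end ZAux

namespace ZAux

open List

/-- the carry cascade in the Zeckendorf-counter tail. -/
def absorb : ℕ → List ℕ → List ℕ
  | c, [] => [c]
  | c, t :: T => if c = t then (c - 2) :: absorb (c + 1) T else c :: t :: T

lemma absorb_chain : ∀ (T : List ℕ) (c : ℕ), 3 ≤ c → (∀ x ∈ T, c ≤ x) →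
    List.Pairwise (· < ·) T →
    ∀ u : List ℕ, ∃ k, GCn k (u ++ c :: T) (u ++ absorb c T) := by
  intro T
  induction T with
  | nil => intro c _ _ _ u; exact ⟨0, GCn.refl _⟩
  | cons t T ih =>
      intro c hc hT hP u
      by_cases hct : c = t
      · subst hct
        have hsp : GCn 1 (u ++ [c, c] ++ T) (u ++ [c - 2, c + 1] ++ T) :=
          gm_split u T c hc
        have hT' : ∀ x ∈ T, c + 1 ≤ x := by
          intro x hx
          have := (List.pairwise_cons.1 hP).1 x hx
          omega
        obtain ⟨k, hk⟩ := ih (c + 1) (by omega) hT'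
          (List.pairwise_cons.1 hP).2 (u ++ [c - 2])
        have e0 : u ++ c :: c :: T = u ++ [c, c] ++ T := by simp
        have e1 : u ++ [c - 2, c + 1] ++ T = u ++ [c - 2] ++ (c + 1) :: T := by
          simp
        have e2 : u ++ [c - 2] ++ absorb (c + 1) T = u ++ absorb c (c :: T) := by
          rw [absorb, if_pos rfl]; simp
        exact ⟨1 + k, (hsp.cast e0.symm rfl).trans' (hk.cast e1.symm e2) rfl⟩
      · refine ⟨0, (GCn.refl _).cast rfl ?_⟩
        rw [absorb, if_neg hct]

lemma absorb_inv : ∀ (T : List ℕ) (c : ℕ), 3 ≤ c → (∀ x ∈ T, c ≤ x) →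
    List.Pairwise (· < ·) T →
    List.Pairwise (· < ·) (absorb c T) ∧ (∀ x ∈ absorb c T, c - 2 ≤ x) ∧
      absorb c T ≠ [] := by
  intro T
  induction T with
  | nil =>
      intro c _ _ _
      refine ⟨by simp [absorb], by simp [absorb] <;> omega, by simp [absorb]⟩
  | cons t T ih =>
      intro c hc hT hP
      by_cases hct : c = t
      · subst hct
        have hT' : ∀ x ∈ T, c + 1 ≤ x := by
          intro x hx
          have := (List.pairwise_cons.1 hP).1 x hx
          omega
        obtain ⟨hP', hge', hne'⟩ := ih (c + 1) (by omega) hT'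
          (List.pairwise_cons.1 hP).2
        rw [absorb, if_pos rfl]
        refine ⟨List.pairwise_cons.2 ⟨fun x hx => ?_, hP'⟩, ?_, by simp⟩
        · have := hge' x hx; omega
        · intro x hx
          rcases List.mem_cons.1 hx with h | h
          · omega
          · have := hge' x h; omega
      · rw [absorb, if_neg hct]
        have h1 : c < t := lt_of_le_of_ne (hT t (by simp)) hct
        refine ⟨List.pairwise_cons.2 ⟨fun x hx => ?_, hP⟩, ?_, by simp⟩
        · rcases List.mem_cons.1 hx with h | h
          · omega
          · have := (List.pairwise_cons.1 hP).1 x h; omega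
        · intro x hx
          rcases List.mem_cons.1 hx with h | h
          · omega
          · rcases List.mem_cons.1 h with h' | h'
            · omega
            · have := hT x (by simp [h']); omega

end ZAux

namespace ZAux

open List

/-- the structured states of our strategy. -/
def st (e b : ℕ) (R : List ℕ) : List ℕ :=
  replicate e 1 ++ replicate b 2 ++ R

/-- invariant of the tail. -/
def RInv (R : List ℕ) : Prop := List.Pairwise (· < ·) R ∧ ∀ x ∈ R, 3 ≤ x

/-- deliver a 3 to the boundary of the tail. -/
lemma deliver (e b : ℕ) (R : List ℕ) (he : e ≤ 1) (hb : 2 ≤ b) :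
    ∃ k e' b', 1 ≤ k ∧ GCn k (st e b R) (st e' b' (3 :: R)) ∧ e' ≤ 1 := by
  interval_cases e
  · obtain ⟨b₂, rfl⟩ : ∃ b₂, b = b₂ + 2 := ⟨b - 2, by omega⟩
    have h1 : GCn 1 (st 0 (b₂+2) R) ([1] ++ [3] ++ (replicate b₂ 2 ++ R)) :=
      (gm_splitTwos [] (replicate b₂ 2 ++ R)).cast
        (by simp [st, replicate_succ]) (by simp)
    have h2 : GCn b₂ ([1] ++ [3] ++ (replicate b₂ 2 ++ R)) (st 1 b₂ (3 :: R)) :=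
      (moveThreeRight b₂ [1] R).cast (by simp) (by simp [st])
    exact ⟨1 + b₂, 1, b₂, by omega, h1.trans h2, le_rfl⟩
  · obtain ⟨b₁, rfl⟩ : ∃ b₁, b = b₁ + 1 := ⟨b - 1, by omega⟩
    have h1 : GCn 1 (st 1 (b₁+1) R) ([] ++ [3] ++ (replicate b₁ 2 ++ R)) :=
      (gm_merge12 (replicate b₁ 2 ++ R)).cast
        (by simp [st, replicate_succ]) (by simp)
    have h2 : GCn b₁ ([] ++ [3] ++ (replicate b₁ 2 ++ R)) (st 0 b₁ (3 :: R)) :=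
      (moveThreeRight b₁ [] R).cast (by simp) (by simp [st])
    exact ⟨1 + b₁, 0, b₁, by omega, h1.trans h2, by omega⟩

/-- resolve a pending 3 at the boundary of the tail. -/
lemma resolve (e b : ℕ) (R : List ℕ) (he : e ≤ 1) (hR : RInv R) :
    ∃ k e' b' R', GCn k (st e b (3 :: R)) (st e' b' R') ∧ e' ≤ 1 ∧ RInv R' := by
  obtain ⟨hP, h3⟩ := hR
  rcases R with _ | ⟨t, R₂⟩
  · exact ⟨0, e, b, [3], GCn.refl _, he, by simp [RInv]⟩
  by_cases ht : t = 3
  case neg =>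
    refine ⟨0, e, b, 3 :: t :: R₂, GCn.refl _, he, ?_, ?_⟩
    · refine List.pairwise_cons.2 ⟨?_, hP⟩
      intro x hx
      rcases List.mem_cons.1 hx with h | h
      · subst h
        have := h3 x (by simp); omega
      · have h4 := (List.pairwise_cons.1 hP).1 x h
        have h5 := h3 t (by simp)
        omega
    · intro x hx
      rcases List.mem_cons.1 hx with h | h
      · omega
      · exact h3 x h
  case pos =>
    subst ht
    have hR₂ : ∀ x ∈ R₂, 4 ≤ x := by
      intro x hx
      have := (List.pairwise_cons.1 hP).1 x hx
      have := h3 3 (by simp)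
      omega
    have hP₂ : List.Pairwise (· < ·) R₂ := (List.pairwise_cons.1 hP).2
    -- split the pair (3,3)
    have h1 : GCn 1 (st e b (3 :: 3 :: R₂))
        (replicate e 1 ++ replicate b 2 ++ [1] ++ ([4] ++ R₂)) :=
      (gm_split (replicate e 1 ++ replicate b 2) R₂ 3 (by norm_num)).cast
        (by simp [st]) (by norm_num)
    -- move the emitted 1 left
    have h2 : GCn b (replicate e 1 ++ replicate b 2 ++ [1] ++ ([4] ++ R₂))
        (replicate e 1 ++ [1] ++ replicate b 2 ++ ([4] ++ R₂)) :=
      moveOneLeft b (replicate e 1) ([4] ++ R₂)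
    -- recombine the 1s if needed
    obtain ⟨k₃, e'', b'', he'', h4⟩ :
        ∃ k₃ e'' b'', e'' ≤ 1 ∧
          GCn k₃ (replicate e 1 ++ [1] ++ replicate b 2 ++ ([4] ++ R₂))
            (replicate e'' 1 ++ replicate b'' 2 ++ (4 :: R₂)) := by
      interval_cases e
      · exact ⟨0, 1, b, le_rfl,
          (GCn.refl (replicate 0 1 ++ [1] ++ replicate b 2 ++ ([4] ++ R₂))).cast
            rfl (by simp)⟩
      · refine ⟨1, 0, b + 1, by omega, ?_⟩
        exact (gm_mergeOnes (replicate b 2 ++ (4 :: R₂))).cast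
          (by simp [replicate_succ]) (by simp [replicate_succ])
    -- cascade
    obtain ⟨k₄, h5⟩ := absorb_chain R₂ 4 (by norm_num) hR₂ hP₂
      (replicate e'' 1 ++ replicate b'' 2)
    obtain ⟨hPA, hgeA, hneA⟩ := absorb_inv R₂ 4 (by norm_num) hR₂ hP₂
    rcases hA2 : absorb 4 R₂ with _ | ⟨a, A₂⟩
    · exact absurd hA2 hneA
    rw [hA2] at hPA hgeA h5
    by_cases ha : a = 2
    · subst ha
      refine ⟨1 + b + (k₃ + k₄), e'', b'' + 1, A₂,
        ((h1.trans h2).trans ((h4.trans h5))).cast rfl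
          (by simp [st, replicate_succ']),
        he'', ?_, ?_⟩
      · exact (List.pairwise_cons.1 hPA).2
      · intro x hx
        have := (List.pairwise_cons.1 hPA).1 x hx
        omega
    · refine ⟨1 + b + (k₃ + k₄), e'', b'', a :: A₂,
        ((h1.trans h2).trans ((h4.trans h5))).cast rfl (by simp [st]),
        he'', hPA, ?_⟩
      · intro x hx
        rcases List.mem_cons.1 hx with h | h
        · have := hgeA a (by simp); omega
        · have h6 := (List.pairwise_cons.1 hPA).1 x h
          have := hgeA a (by simp)
          omega

/-- one macro round. -/
lemma macroStep (e b : ℕ) (R : List ℕ) (he : e ≤ 1) (hb : 2 ≤ b) (hR : RInv R) :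
    ∃ k e' b' R', 1 ≤ k ∧ GCn k (st e b R) (st e' b' R') ∧ e' ≤ 1 ∧ RInv R' := by
  obtain ⟨k₁, e₁, b₁, hk₁, h1, he₁⟩ := deliver e b R he hb
  obtain ⟨k₂, e₂, b₂, R₂, h2, he₂, hR₂⟩ := resolve e₁ b₁ R he₁ hR
  exact ⟨k₁ + k₂, e₂, b₂, R₂, by omega, h1.trans h2, he₂, hR₂⟩

/-- run macro rounds until fewer than two 2s remain. -/
lemma loop : ∀ (W e b : ℕ) (R : List ℕ), wt (st e b R) ≤ W → e ≤ 1 → RInv R →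
    ∃ k e' b' R', GCn k (st e b R) (st e' b' R') ∧ e' ≤ 1 ∧ b' ≤ 1 ∧ RInv R' := by
  intro W
  induction W with
  | zero =>
      intro e b R hW he hR
      by_cases hb : b ≤ 1
      · exact ⟨0, e, b, R, GCn.refl _, he, hb, hR⟩
      · obtain ⟨k, e', b', R', hk, hc, -, -⟩ := macroStep e b R he (by omega) hR
        have := hc.toCn.wt_le
        omega
  | succ W ih =>
      intro e b R hW he hR
      by_cases hb : b ≤ 1
      · exact ⟨0, e, b, R, GCn.refl _, he, hb, hR⟩
      · obtain ⟨k, e₁, b₁, R₁, hk, hc, he₁, hR₁⟩ := macroStep e b R he (by omega) hR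
        have hwt := hc.toCn.wt_le
        obtain ⟨k', e', b', R', hc', he', hb', hR'⟩ :=
          ih e₁ b₁ R₁ (by omega) he₁ hR₁
        exact ⟨k + k', e', b', R', hc.trans hc', he', hb', hR'⟩

/-- phase 1: convert the 1s into 2s. -/
lemma phase1 : ∀ (a c : ℕ), ∃ k e b,
    GCn k (replicate a 1 ++ replicate c 2) (st e b []) ∧ e ≤ 1 := by
  intro a
  induction a using Nat.strong_induction_on with
  | _ a ih =>
    intro c
    by_cases ha : a ≤ 1
    · exact ⟨0, a, c, (GCn.refl _).cast rfl (by simp [st]), ha⟩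
    · obtain ⟨a₂, rfl⟩ : ∃ a₂, a = a₂ + 2 := ⟨a - 2, by omega⟩
      have h1 : GCn 1 (replicate (a₂+2) 1 ++ replicate c 2)
          ([] ++ [2] ++ (replicate a₂ 1 ++ replicate c 2)) :=
        (gm_mergeOnes (replicate a₂ 1 ++ replicate c 2)).cast
          (by simp [replicate_succ]) (by simp)
      have h2 : GCn a₂ ([] ++ [2] ++ (replicate a₂ 1 ++ replicate c 2))
          (replicate a₂ 1 ++ replicate (c+1) 2) :=
        (moveTwoRight a₂ [] (replicate c 2)).cast (by simp)
          (by simp [replicate_succ])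
      obtain ⟨k, e, b, hk, he⟩ := ih a₂ (by omega) (c+1)
      exact ⟨1 + a₂ + k, e, b, (h1.trans' h2 rfl).trans hk, he⟩

/-- the full constructed good chain. -/
lemma construction (n : ℕ) : ∃ K e b R, e ≤ 1 ∧ b ≤ 1 ∧ RInv R ∧
    GCn K (replicate n 1) (st e b R) := by
  obtain ⟨k₁, e₁, b₁, h1, he₁⟩ := phase1 n 0
  obtain ⟨k₂, e', b', R', h2, he', hb', hR'⟩ :=
    loop (wt (st e₁ b₁ [])) e₁ b₁ [] le_rfl he₁ (by simp [RInv])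
  exact ⟨k₁ + k₂, e', b', R', he', hb', hR',
    (h1.cast (by simp) rfl).trans h2⟩

end ZAux

namespace ZAux

open List

lemma wt_le_len_mul_val : ∀ S : List ℕ, wt S ≤ S.length * val S := by
  intro S
  induction S with
  | nil => simp
  | cons x s ih =>
      simp only [wt_cons, List.length_cons, val_cons]
      nlinarith [Nat.zero_le (val s), Nat.zero_le (F x)]

lemma om_le {B : ℕ} : ∀ S : List ℕ, (∀ x ∈ S, x ≤ B) → om S ≤ B * val S := by
  intro S
  induction S with
  | nil => simp
  | cons x s ih =>
      intro h
      simp only [om_cons, val_cons]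
      have h1 : x ≤ B := h x (by simp)
      have h2 := ih (fun y hy => h y (by simp [hy]))
      nlinarith [Nat.zero_le (F x)]

lemma F_le_val {x : ℕ} : ∀ {S : List ℕ}, x ∈ S → F x ≤ val S := by
  intro S
  induction S with
  | nil => simp
  | cons y s ih =>
      intro hx
      rcases List.mem_cons.1 hx with h | h
      · subst h; simp
      · have := ih h; simp; omega

@[simp] lemma val_replicate_one (n : ℕ) : val (replicate n 1) = n := by
  induction n with
  | zero => simp
  | succ n ih => simp [replicate_succ, ih]; omega

@[simp] lemma om_replicate_one (n : ℕ) : om (replicate n 1) = n := by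
  induction n with
  | zero => simp
  | succ n ih => simp [replicate_succ, ih]; omega

lemma tri_eq (n : ℕ) : 2 * wt (replicate n 1) = n * (n + 1) := by
  induction n with
  | zero => simp
  | succ n ih =>
      rw [replicate_succ, wt_cons]
      simp only [List.length_replicate, F1]
      nlinarith

lemma two_pow_le_F : ∀ k : ℕ, 2 ^ k ≤ F (2 * k) := by
  intro k
  induction k with
  | zero => simp [F]
  | succ k ih =>
      have h1 : F (2*k+2) = F (2*k+1) + F (2*k) := F_add_two (2*k)
      have h2 : F (2*k) ≤ F (2*k+1) := F_mono (by omega)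
      have : 2 * 2 ^ k ≤ F (2*k+2) := by omega
      calc 2 ^ (k+1) = 2 * 2^k := by ring
      _ ≤ F (2*k+2) := this
      _ = F (2*(k+1)) := by ring_nf

lemma index_le_of_F_le {x n : ℕ} (hn : 1 ≤ n) (h : F x ≤ n) :
    x ≤ 2 * Nat.log 2 n + 2 := by
  by_contra hx
  push_neg at hx
  have h1 : n < 2 ^ (Nat.log 2 n + 1) := Nat.lt_pow_succ_log_self (by norm_num) n
  have h2 : 2 ^ (Nat.log 2 n + 1) ≤ F (2 * (Nat.log 2 n + 1)) :=
    two_pow_le_F _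
  have h3 : F (2 * (Nat.log 2 n + 1)) ≤ F x := F_mono (by omega)
  omega

lemma sorted_length_le {B : ℕ} : ∀ R : List ℕ, List.Pairwise (· < ·) R →
    (∀ x ∈ R, x ≤ B) → R.length ≤ B + 1 := by
  intro R hP hB
  have nd : R.Nodup := hP.imp (fun h => ne_of_lt h)
  have hsub : R.toFinset ⊆ Finset.range (B + 1) := by
    intro x hx
    simp only [Finset.mem_range]
    have := hB x (List.mem_toFinset.1 hx)
    omega
  have := Finset.card_le_card hsub
  rw [Finset.card_range] at this
  rw [← List.toFinset_card_of_nodup nd]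
  exact this

/-- bound on the potential of the end state. -/
lemma th_end_le (n e b : ℕ) (R : List ℕ) (hn : 1 ≤ n) (he : e ≤ 1) (hb : b ≤ 1)
    (hR : RInv R) (hval : val (st e b R) = n) :
    th (st e b R) ≤ (2 * (2 * Nat.log 2 n + 2) + 3) * n := by
  set B := 2 * Nat.log 2 n + 2 with hB
  have hBge : 2 ≤ B := by omega
  have hxB : ∀ x ∈ st e b R, x ≤ B := by
    intro x hx
    have h1 : F x ≤ val (st e b R) := F_le_val hx
    rw [hval] at h1
    exact index_le_of_F_le hn h1
  have hlen : (st e b R).length ≤ B + 3 := by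
    have hRB : ∀ x ∈ R, x ≤ B := fun x hx => hxB x (by simp [st, hx])
    have := sorted_length_le R hR.1 hRB
    simp only [st, List.length_append, List.length_replicate]
    omega
  have h1 : wt (st e b R) ≤ (B + 3) * n := by
    have := wt_le_len_mul_val (st e b R)
    rw [hval] at this
    calc wt (st e b R) ≤ (st e b R).length * n := this
    _ ≤ (B + 3) * n := Nat.mul_le_mul_right n hlen
  have h2 : om (st e b R) ≤ B * n := by
    have := om_le (st e b R) hxB
    rw [hval] at this
    exact this
  show wt _ + om _ ≤ _
  nlinarith

/-- the κ-length lower bound on the constructed chain. -/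
lemma lower_bound (n : ℕ) (hn : 1 ≤ n) :
    ∃ K E, Cn K (replicate n 1) E ∧
      wt (replicate n 1) + n ≤ K + (2 * (2 * Nat.log 2 n + 2) + 3) * n := by
  obtain ⟨K, e, b, R, he, hb, hR, hc⟩ := construction n
  have hval : val (st e b R) = n := by
    have := hc.toCn.val_eq
    rwa [val_replicate_one] at this
  have hth := hc.th_le
  have hend := th_end_le n e b R hn he hb hR hval
  refine ⟨K, st e b R, hc.toCn, ?_⟩
  have : th (replicate n 1) = wt (replicate n 1) + n := by
    show wt _ + om _ = _
    rw [om_replicate_one]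
  omega

end ZAux

namespace ZAux

open List

/-- turn a chain into a play function. -/
lemma cn_to_fun {m : ℕ} {S T : List ℕ} (h : Cn m S T) :
    ∃ s : ℕ → List ℕ, s 0 = S ∧ s m = T ∧ ∀ t < m, Move (s t) (s (t + 1)) := by
  induction h with
  | refl S => exact ⟨fun _ => S, rfl, rfl, by omega⟩
  | @step S T U k mv tail ih =>
      obtain ⟨s₁, h0, hm, hs⟩ := ih
      refine ⟨fun t => Nat.casesOn t S (fun t' => s₁ t'), rfl, hm, ?_⟩
      intro t ht
      cases t with
      | zero => show Move S (s₁ 0); rw [h0]; exact mv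
      | succ t' => exact hs t' (by omega)

/-- extend any state to a terminal state. -/
lemma ext_terminal : ∀ S : List ℕ, ∃ j T, Cn j S T ∧ Terminal T := by
  intro S
  generalize hW : wt S = W
  induction W using Nat.strong_induction_on generalizing S with
  | _ W ih =>
    by_cases h : Terminal S
    · exact ⟨0, S, Cn.refl S, h⟩
    · have h2 : ∃ T, Move S T := by
        simp only [Terminal, not_forall, not_not] at h
        exact h
      obtain ⟨T, hT⟩ := h2
      have := wt_move hT
      obtain ⟨j, T', hc, hterm⟩ := ih (wt T) (by omega) T rfl
      exact ⟨j + 1, T', Cn.step hT hc |>.cast rfl rfl |> fun c => by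
        simpa [Nat.add_comm] using c, hterm⟩

/-- the play set. -/
def PlaySet (n : ℕ) : Set ℕ :=
  {m | ∃ s : ℕ → List ℕ, IsPlay n s m ∧ Terminal (s m)}

lemma M_def (n : ℕ) : M n = sSup (PlaySet n) := rfl

lemma mem_playSet {n m : ℕ} {T : List ℕ} (h : Cn m (replicate n 1) T)
    (hT : Terminal T) : m ∈ PlaySet n := by
  obtain ⟨s, h0, hm, hs⟩ := cn_to_fun h
  exact ⟨s, ⟨h0, hs⟩, by rwa [hm]⟩

lemma playSet_le {n m : ℕ} (h : m ∈ PlaySet n) : m ≤ wt (replicate n 1) := by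
  obtain ⟨s, ⟨h0, hs⟩, -⟩ := h
  have key : ∀ t, t ≤ m → wt (s t) + t ≤ wt (s 0) := by
    intro t
    induction t with
    | zero => omega
    | succ t ih =>
        intro ht
        have h1 := ih (by omega)
        have h2 := wt_move (hs t (by omega))
        omega
  have := key m le_rfl
  rw [h0] at this
  omega

lemma M_le (n : ℕ) : M n ≤ wt (replicate n 1) :=
  csSup_le' (fun _ hm => playSet_le hm)

lemma bddAbove_playSet (n : ℕ) : BddAbove (PlaySet n) :=
  ⟨wt (replicate n 1), fun _ hm => playSet_le hm⟩

/-- main numerical lower bound for `M`. -/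
lemma M_ge (n : ℕ) (hn : 1 ≤ n) :
    wt (replicate n 1) + n ≤ M n + (2 * (2 * Nat.log 2 n + 2) + 3) * n := by
  obtain ⟨K, E, hc, hKbd⟩ := lower_bound n hn
  obtain ⟨j, T', hext, hterm⟩ := ext_terminal E
  have hmem : K + j ∈ PlaySet n := mem_playSet (hc.trans hext) hterm
  have hMK : K + j ≤ M n := le_csSup (bddAbove_playSet n) hmem
  omega

end ZAux

open Filter in
theorem stmt_17 :
    Filter.Tendsto (fun n : ℕ => (M n : ℝ) / ((n : ℝ) ^ 2 / 2))
      Filter.atTop (nhds 1) := by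
  have hup : ∀ n : ℕ, (M n : ℝ) ≤ ((n:ℝ) * (n+1))/2 := by
    intro n
    have h1 := ZAux.M_le n
    have h2 := ZAux.tri_eq n
    have h3 : (2 * M n : ℕ) ≤ (n * (n+1) : ℕ) := by omega
    have h4 : ((2 * M n : ℕ) : ℝ) ≤ ((n * (n+1) : ℕ) : ℝ) := by exact_mod_cast h3
    push_cast at h4
    linarith
  have hlow : ∀ n : ℕ, 1 ≤ n →
      (n:ℝ)^2/2 - (4*(Real.log n/Real.log 2) + 7) * n ≤ M n := by
    intro n hn
    have h1 := ZAux.M_ge n hn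
    have h2 := ZAux.tri_eq n
    have hL : (Nat.log 2 n : ℝ) ≤ Real.log n / Real.log 2 := by
      have hp : (2:ℕ) ^ (Nat.log 2 n) ≤ n := Nat.pow_log_le_self 2 (by omega)
      have hp' : ((2:ℝ)) ^ (Nat.log 2 n) ≤ (n:ℝ) := by exact_mod_cast hp
      have hlog : Real.log ((2:ℝ) ^ (Nat.log 2 n)) ≤ Real.log n :=
        Real.log_le_log (by positivity) hp'
      rw [Real.log_pow] at hlog
      have h2pos : (0:ℝ) < Real.log 2 := Real.log_pos (by norm_num)
      rw [le_div_iff₀ h2pos]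
      exact hlog
    have h1' : (ZAux.wt (List.replicate n 1) : ℝ) + n
        ≤ (M n : ℝ) + (2*(2*(Nat.log 2 n : ℝ) + 2)+3) * n := by
      exact_mod_cast h1
    have hW : ((n:ℝ) * (n+1))/2 = (ZAux.wt (List.replicate n 1) : ℝ) := by
      have h5 : ((2 * ZAux.wt (List.replicate n 1) : ℕ) : ℝ)
          = ((n * (n+1) : ℕ) : ℝ) := by exact_mod_cast congrArg Nat.cast h2
      push_cast at h5
      linarith
    have hn' : (1:ℝ) ≤ (n:ℝ) := by exact_mod_cast hn
    nlinarith [mul_le_mul_of_nonneg_right hL (by positivity : (0:ℝ) ≤ (n:ℝ))]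
  have t1 : Filter.Tendsto (fun n : ℕ => Real.log n / n) atTop (nhds 0) := by
    have h := Real.isLittleO_log_id_atTop.tendsto_div_nhds_zero
    have := h.comp (tendsto_natCast_atTop_atTop (R := ℝ))
    exact this
  have t2 : Filter.Tendsto (fun n : ℕ => 1/(n:ℝ)) atTop (nhds 0) :=
    tendsto_one_div_atTop_nhds_zero_nat
  have tlo : Filter.Tendsto
      (fun n : ℕ => 1 - ((8/Real.log 2) * (Real.log n / n) + 14 * (1/(n:ℝ))))
      atTop (nhds 1) := by
    have h3 : Filter.Tendsto
        (fun n : ℕ => (8/Real.log 2) * (Real.log n / n) + 14 * (1/(n:ℝ)))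
        atTop (nhds 0) := by
      have := (t1.const_mul (8/Real.log 2)).add (t2.const_mul 14)
      simpa [mul_comm] using this
    have := h3.const_sub 1
    simpa using this
  have thi : Filter.Tendsto (fun n : ℕ => 1 + 1/(n:ℝ)) atTop (nhds 1) := by
    have := t2.const_add 1
    simpa using this
  refine tendsto_of_tendsto_of_tendsto_of_le_of_le' tlo thi ?_ ?_
  · filter_upwards [eventually_ge_atTop 1] with n hn
    have hnR : (0:ℝ) < (n:ℝ) := by exact_mod_cast hn
    have h := hlow n hn
    rw [le_div_iff₀ (by positivity)]
    have heq : (1 - ((8/Real.log 2) * (Real.log n / n) + 14 * (1/(n:ℝ))))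
        * ((n:ℝ)^2/2) = (n:ℝ)^2/2 - (4*(Real.log n/Real.log 2) + 7) * n := by
      field_simp
      ring
    rw [heq]
    exact h
  · filter_upwards [eventually_ge_atTop 1] with n hn
    have hnR : (0:ℝ) < (n:ℝ) := by exact_mod_cast hn
    rw [div_le_iff₀ (by positivity)]
    have heq : (1 + 1/(n:ℝ)) * ((n:ℝ)^2/2) = ((n:ℝ) * (n+1))/2 := by
      field_simp
    rw [heq]
    exact hup n
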